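/- Every connected quasi-λ-distance-balanced graph with minimum degree 1 on at least 3 vertices is a star K_{1,k} (k ≥ 2). -/

import Mathlib

open SimpleGraph

/-- `wSet G u v` is the set of vertices strictly closer to `u` than to `v`. -/
def wSet {V : Type*} (G : SimpleGraph V) (u v : V) : Set V :=
  {x | G.dist x u < G.dist x v}

/-- `G` is quasi-`lam`-distance-balanced. -/
def QuasiDB {V : Type*} (G : SimpleGraph V) (lam : ℚ) : Prop :=
  ∀ u v : V, G.Adj u v →
    ((wSet G u v).ncard : ℚ) = lam * ((wSet G v u).ncard : ℚ) ∨
    ((wSet G v u).ncard : ℚ) = lam * ((wSet G u v).ncard : ℚ)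


/-- Every connected quasi-`lam`-distance-balanced graph on at least `3` vertices
having a vertex of degree `1` is a star `K_{1,k}` with `k ≥ 2`. -/
theorem stmt16 {V : Type*} [Fintype V] [DecidableEq V] (G : SimpleGraph V)
    [DecidableRel G.Adj] (hconn : G.Connected)
    (lam : ℚ) (hlam : 1 < lam) (hq : QuasiDB G lam)
    (hcard : 3 ≤ Fintype.card V) (x : V) (hx : G.degree x = 1) :
    ∃ k : ℕ, 2 ≤ k ∧
      Nonempty (G ≃g completeBipartiteGraph (Fin 1) (Fin k)) := by
  classical
  set n := Fintype.card V with hn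
  -- the unique neighbour `y` of `x`
  obtain ⟨y, hy⟩ : ∃ y, G.neighborFinset x = {y} := Finset.card_eq_one.mp hx
  have hxy : G.Adj x y := by
    rw [← mem_neighborFinset, hy]; simp
  have huniq : ∀ w, G.Adj x w → w = y := by
    intro w hw
    have := (mem_neighborFinset G x w).mpr hw
    rw [hy] at this; simpa using this
  have hxny : x ≠ y := hxy.ne
  have hdxy : G.dist x y = 1 := dist_eq_one_iff_adj.mpr hxy
  -- distances to `x` go through `y`
  have L2 : ∀ z, z ≠ x → G.dist z x = G.dist z y + 1 := by
    intro z hz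
    have h1 : G.dist z x ≤ G.dist z y + 1 := by
      have ht := hconn.dist_triangle (u := z) (v := y) (w := x)
      have hyx : G.dist y x = 1 := by
        rw [SimpleGraph.dist_comm]; exact hdxy
      omega
    have h2 : G.dist z y + 1 ≤ G.dist z x := by
      obtain ⟨p, hp⟩ := hconn.exists_walk_length_eq_dist x z
      cases p with
      | nil => exact absurd rfl hz
      | @cons _ w _ h q =>
        have hw : w = y := huniq _ h
        have hq1 : G.dist z y ≤ q.length := by
          rw [SimpleGraph.dist_comm, ← hw]; exact dist_le q
        have hlen : G.dist x z = q.length + 1 := by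
          rw [← hp]; simp [SimpleGraph.Walk.length_cons]
        have hcm : G.dist z x = G.dist x z := SimpleGraph.dist_comm
        omega
    omega
  -- the two sides of the edge xy
  have hWxy : wSet G x y = {x} := by
    ext z
    simp only [wSet, Set.mem_setOf_eq, Set.mem_singleton_iff]
    constructor
    · intro hlt
      by_contra hzx
      have := L2 z hzx
      omega
    · rintro rfl
      rw [SimpleGraph.dist_self, hdxy]
      omega
  have hWyx : wSet G y x = {x}ᶜ := by
    ext z
    simp only [wSet, Set.mem_setOf_eq, Set.mem_compl_iff, Set.mem_singleton_iff]
    constructor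
    · intro hlt
      rintro rfl
      simp [SimpleGraph.dist_self] at hlt
    · intro hzx
      have := L2 z hzx
      omega
  have hcompl : ({x}ᶜ : Set V).ncard = n - 1 := by
    have h1 : ({x} : Set V).ncard = 1 := Set.ncard_singleton x
    have h2 : ({x} : Set V) ∪ {x}ᶜ = Set.univ := Set.union_compl_self _
    have h3 : (Set.univ : Set V).ncard = n := by
      rw [Set.ncard_univ, Nat.card_eq_fintype_card]
    have h4 := Set.ncard_union_eq (disjoint_compl_right) (Set.toFinite _) (Set.toFinite _)
      (s := ({x} : Set V)) (t := ({x}ᶜ : Set V))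
    rw [h2, h3, h1] at h4
    omega
  -- lam = n - 1
  have hlamval : lam = (n : ℚ) - 1 := by
    have hqe := hq x y hxy
    rw [hWxy, hWyx, Set.ncard_singleton, hcompl] at hqe
    have hcast : ((n - 1 : ℕ) : ℚ) = (n : ℚ) - 1 := by
      have h1 : 1 ≤ n := by omega
      push_cast [h1]; ring
    rw [hcast] at hqe
    rcases hqe with h | h
    · exfalso
      push_cast at h
      have hn2 : (2 : ℚ) ≤ (n : ℚ) - 1 := by
        have : (3 : ℚ) ≤ (n : ℚ) := by exact_mod_cast hcard
        linarith
      have : (1 : ℚ) * ((n : ℚ) - 1) < lam * ((n : ℚ) - 1) :=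
        mul_lt_mul_of_pos_right hlam (by linarith)
      linarith
    · push_cast at h
      linarith
  -- the key edge lemma
  have L5 : ∀ u v, G.Adj u v →
      (wSet G u v = {u} ∨ wSet G v u = {v}) ∧
      ∀ z, z ∈ wSet G u v ∨ z ∈ wSet G v u := by
    intro u v huv
    have hduv : G.dist u v = 1 := dist_eq_one_iff_adj.mpr huv
    have hdvu : G.dist v u = 1 := by
      rw [SimpleGraph.dist_comm]; exact hduv
    have humem : u ∈ wSet G u v := by
      simp [wSet, SimpleGraph.dist_self, hduv]
    have hvmem : v ∈ wSet G v u := by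
      simp [wSet, SimpleGraph.dist_self, hdvu]
    have hdisj : Disjoint (wSet G u v) (wSet G v u) := by
      rw [Set.disjoint_left]
      intro z h1 h2
      simp only [wSet, Set.mem_setOf_eq] at h1 h2
      omega
    have hsum : (wSet G u v).ncard + (wSet G v u).ncard ≤ n := by
      have h4 := Set.ncard_union_eq hdisj (Set.toFinite _) (Set.toFinite _)
      have h5 : (wSet G u v ∪ wSet G v u).ncard ≤ (Set.univ : Set V).ncard :=
        Set.ncard_le_ncard (Set.subset_univ _) (Set.toFinite _)
      rw [Set.ncard_univ, Nat.card_eq_fintype_card] at h5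
      omega
    have ha1 : 1 ≤ (wSet G u v).ncard :=
      (Set.ncard_pos (Set.toFinite _)).mpr ⟨u, humem⟩
    have hb1 : 1 ≤ (wSet G v u).ncard :=
      (Set.ncard_pos (Set.toFinite _)).mpr ⟨v, hvmem⟩
    -- in either case, one side has ncard 1 and the other n-1
    have key : ∀ a b : ℕ, 1 ≤ a → 1 ≤ b → a + b ≤ n →
        (a : ℚ) = ((n : ℚ) - 1) * b → b = 1 ∧ a = n - 1 := by
      intro a b ha hb hab hEq
      have hb' : b = 1 := by
        by_contra hbne
        have hb2 : 2 ≤ b := by omega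
        have hle : ((n : ℚ) - 1) * b + b ≤ (n : ℚ) := by
          rw [← hEq]; exact_mod_cast hab
        have hnq : (3 : ℚ) ≤ (n : ℚ) := by exact_mod_cast hcard
        have hbq : (2 : ℚ) ≤ (b : ℚ) := by exact_mod_cast hb2
        nlinarith
      subst hb'
      refine ⟨rfl, ?_⟩
      have h1 : (a : ℚ) = (n : ℚ) - 1 := by rw [hEq]; push_cast; ring
      have hcast : ((n - 1 : ℕ) : ℚ) = (n : ℚ) - 1 := by
        have h2 : 1 ≤ n := by omega
        push_cast [h2]; ring
      exact_mod_cast h1.trans hcast.symm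
    have hcases := hq u v huv
    rw [hlamval] at hcases
    have hmain : ((wSet G u v).ncard = 1 ∧ (wSet G v u).ncard = n - 1) ∨
        ((wSet G v u).ncard = 1 ∧ (wSet G u v).ncard = n - 1) := by
      rcases hcases with h | h
      · have := key _ _ ha1 hb1 hsum h
        exact Or.inr ⟨this.1, this.2⟩
      · have := key _ _ hb1 ha1 (by omega) h
        exact Or.inl ⟨this.1, this.2⟩
    constructor
    · rcases hmain with ⟨h1, _⟩ | ⟨h1, _⟩
      · left
        obtain ⟨a, ha⟩ := Set.ncard_eq_one.mp h1
        rw [ha] at humem ⊢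
        rw [Set.mem_singleton_iff] at humem
        rw [humem]
      · right
        obtain ⟨a, ha⟩ := Set.ncard_eq_one.mp h1
        rw [ha] at hvmem ⊢
        rw [Set.mem_singleton_iff] at hvmem
        rw [hvmem]
    · have htot : (wSet G u v).ncard + (wSet G v u).ncard = n := by
        rcases hmain with ⟨h1, h2⟩ | ⟨h1, h2⟩ <;> omega
      have hunion : wSet G u v ∪ wSet G v u = Set.univ := by
        apply Set.eq_of_subset_of_ncard_le (Set.subset_univ _) _ (Set.toFinite _)
        rw [Set.ncard_univ, Nat.card_eq_fintype_card,
          Set.ncard_union_eq hdisj (Set.toFinite _) (Set.toFinite _), htot]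
      intro z
      have hz : z ∈ wSet G u v ∪ wSet G v u := by rw [hunion]; trivial
      exact hz
  -- every vertex other than y is adjacent to y
  have hadj_y : ∀ u, u ≠ y → G.Adj y u := by
    intro u hu
    have hpos : 0 < G.dist y u := hconn.pos_dist_of_ne (Ne.symm hu)
    have hnot2 : ¬ 2 ≤ G.dist y u := by
      intro h2
      obtain ⟨p, hp⟩ := hconn.exists_walk_length_eq_dist y u
      cases p with
      | nil => exact hu rfl
      | @cons _ v _ h q =>
        have hpl : q.length + 1 = G.dist y u := by
          rw [← hp]; simp [SimpleGraph.Walk.length_cons]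
        have hvy : v ≠ y := h.ne'
        have hdyv : G.dist y v = 1 := dist_eq_one_iff_adj.mpr h
        have hduv : G.dist u v ≤ G.dist y u - 1 := by
          have hle := dist_le q
          have hcm : G.dist u v = G.dist v u := SimpleGraph.dist_comm
          omega
        have hux : u ≠ x := by
          intro he
          rw [he, SimpleGraph.dist_comm, hdxy] at h2
          omega
        have hvx : v ≠ x := by
          intro he
          have h3 := L2 u hux
          rw [he] at hduv
          have h5 : G.dist u y = G.dist y u := SimpleGraph.dist_comm
          omega
        have hxmem : x ∈ wSet G y v := by
          simp only [wSet, Set.mem_setOf_eq]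
          have h1 : G.dist x y = 1 := hdxy
          have h3 := L2 v hvx
          have h4 : G.dist v y = 1 := by
            rw [SimpleGraph.dist_comm]; exact hdyv
          have h5 : G.dist x v = G.dist v x := SimpleGraph.dist_comm
          omega
        have humem : u ∈ wSet G v y := by
          simp only [wSet, Set.mem_setOf_eq]
          have h5 : G.dist u y = G.dist y u := SimpleGraph.dist_comm
          omega
        have huvne : u ≠ v := by
          intro he
          rw [he, hdyv] at h2
          omega
        rcases (L5 y v h).1 with hs | hs
        · rw [hs, Set.mem_singleton_iff] at hxmem
          exact hxny hxmem
        · rw [hs, Set.mem_singleton_iff] at humem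
          exact huvne humem
    have hone : G.dist y u = 1 := by omega
    exact dist_eq_one_iff_adj.mp hone
  -- every edge is incident to y
  have hno : ∀ u v, G.Adj u v → u = y ∨ v = y := by
    intro u v huv
    by_contra hcon
    push_neg at hcon
    obtain ⟨huy, hvy⟩ := hcon
    have hux : u ≠ x := by
      intro he
      exact hvy (huniq v (he ▸ huv))
    have hvx : v ≠ x := by
      intro he
      exact huy (huniq u (he ▸ huv.symm))
    have hdu : G.dist x u = 2 := by
      have h3 := L2 u hux
      have h4 : G.dist u y = 1 := by
        rw [SimpleGraph.dist_comm]; exact dist_eq_one_iff_adj.mpr (hadj_y u huy)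
      have h5 : G.dist x u = G.dist u x := SimpleGraph.dist_comm
      omega
    have hdv : G.dist x v = 2 := by
      have h3 := L2 v hvx
      have h4 : G.dist v y = 1 := by
        rw [SimpleGraph.dist_comm]; exact dist_eq_one_iff_adj.mpr (hadj_y v hvy)
      have h5 : G.dist x v = G.dist v x := SimpleGraph.dist_comm
      omega
    rcases (L5 u v huv).2 x with h | h <;>
      simp only [wSet, Set.mem_setOf_eq, hdu, hdv] at h <;> omega
  -- the adjacency of G is that of a star centred at y
  have hadj_iff : ∀ a b, G.Adj a b ↔ ((a = y ∧ b ≠ y) ∨ (b = y ∧ a ≠ y)) := by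
    intro a b
    constructor
    · intro h
      rcases hno a b h with rfl | rfl
      · exact Or.inl ⟨rfl, h.ne'⟩
      · exact Or.inr ⟨rfl, h.ne⟩
    · rintro (⟨rfl, hb⟩ | ⟨rfl, ha⟩)
      · exact hadj_y b hb
      · exact (hadj_y a ha).symm
  -- build the isomorphism
  refine ⟨n - 1, by omega, ?_⟩
  have hc0 : Fintype.card {z : V // z = y} = 1 := Fintype.card_subtype_eq y
  have hc1 : Fintype.card {z : V // ¬ z = y} = n - 1 := by
    rw [Fintype.card_subtype_compl, hc0]
  let e0 : {z : V // z = y} ≃ Fin 1 := Fintype.equivFinOfCardEq hc0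
  let e1 : {z : V // ¬ z = y} ≃ Fin (n - 1) := Fintype.equivFinOfCardEq hc1
  let e : V ≃ (Fin 1 ⊕ Fin (n - 1)) :=
    (Equiv.sumCompl (· = y)).symm.trans (Equiv.sumCongr e0 e1)
  refine ⟨⟨e, ?_⟩⟩
  intro a b
  show (completeBipartiteGraph (Fin 1) (Fin (n-1))).Adj (e a) (e b) ↔ G.Adj a b
  by_cases ha : a = y <;> by_cases hb : b = y <;>
    simp [e, Equiv.sumCompl_symm_apply_of_pos, Equiv.sumCompl_symm_apply_of_neg,
      ha, hb, hadj_iff]
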